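/- For the multicomponent plasma model with state V = (ρ_h, ρ_h u, E, ρ_e, ρ_e ε_e), ideal-gas laws p_h = κρ_hε_h, p_e = κρ_eε_e (κ = γ−1), total energy E = ρ_h u²/2 + ρ_hε_h + ρ_eε_e, and mathematical entropy H = −ρ_h s_h − ρ_e s_e with s_h = c_v ln(p_h/(κρ_h^γ)), s_e = c_v ln(p_e/(κρ_e^γ)), the entropic variables w = (∂_V H)^t are w = ((g_h − u²/2)/T_h, u/T_h, −1/T_h, g_e/T_e, 1/T_h − 1/T_e), where g_k = ε_k + p_k/ρ_k − T_k s_k and T_k = ε_k/c_v. -/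

import Mathlib

noncomputable section

def pd {p : ℕ} (f : (Fin p → ℝ) → ℝ) (V : Fin p → ℝ) (i : Fin p) : ℝ :=
  fderiv ℝ f V (Pi.single i 1)

def grad {p : ℕ} (H : (Fin p → ℝ) → ℝ) (V : Fin p → ℝ) : Fin p → ℝ :=
  fun i => pd H V i

namespace Plasma
/- State vector `V = (ρ_h, ρ_h u, E, ρ_e, ρ_e ε_e)`. -/
def rhoh (V : Fin 5 → ℝ) : ℝ := V 0
def u (V : Fin 5 → ℝ) : ℝ := V 1 / V 0
def rhoe (V : Fin 5 → ℝ) : ℝ := V 3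
def epse (V : Fin 5 → ℝ) : ℝ := V 4 / V 3
/-- `ε_h = (E − ρ_h u²/2 − ρ_e ε_e)/ρ_h`. -/
def epsh (V : Fin 5 → ℝ) : ℝ := (V 2 - (V 1) ^ 2 / (2 * V 0) - V 4) / V 0
def ph (γ : ℝ) (V : Fin 5 → ℝ) : ℝ := (γ - 1) * rhoh V * epsh V
def pe (γ : ℝ) (V : Fin 5 → ℝ) : ℝ := (γ - 1) * rhoe V * epse V
def Th (cv : ℝ) (V : Fin 5 → ℝ) : ℝ := epsh V / cv
def Te (cv : ℝ) (V : Fin 5 → ℝ) : ℝ := epse V / cv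
def sh (cv γ : ℝ) (V : Fin 5 → ℝ) : ℝ :=
  cv * Real.log (ph γ V / ((γ - 1) * (rhoh V) ^ γ))
def se (cv γ : ℝ) (V : Fin 5 → ℝ) : ℝ :=
  cv * Real.log (pe γ V / ((γ - 1) * (rhoe V) ^ γ))
def gh (cv γ : ℝ) (V : Fin 5 → ℝ) : ℝ :=
  epsh V + ph γ V / rhoh V - Th cv V * sh cv γ V
def ge (cv γ : ℝ) (V : Fin 5 → ℝ) : ℝ :=
  epse V + pe γ V / rhoe V - Te cv V * se cv γ V
/-- Plasma mathematical entropy `H = −ρ_h s_h − ρ_e s_e`. -/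
def Hpl (cv γ : ℝ) (V : Fin 5 → ℝ) : ℝ := -(V 0 * sh cv γ V + V 3 * se cv γ V)
end Plasma


open Plasma in
/-- entropy of heavy species, division-free form -/
lemma sh_eq (cv γ : ℝ) (hγ : 1 < γ) (W : Fin 5 → ℝ) (ha : 0 < W 0)
    (hQ : 0 < 2 * W 0 * W 2 - W 1 * W 1 - 2 * W 0 * W 4) :
    sh cv γ W = cv * (Real.log (2 * W 0 * W 2 - W 1 * W 1 - 2 * W 0 * W 4)
      - Real.log (2 * (W 0 * W 0)) - (γ - 1) * Real.log (W 0)) := by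
  have hκ : γ - 1 ≠ 0 := by linarith
  have heps : epsh W = (2 * W 0 * W 2 - W 1 * W 1 - 2 * W 0 * W 4) / (2 * (W 0 * W 0)) := by
    unfold epsh; field_simp
  have hεh : 0 < epsh W := by rw [heps]; positivity
  have h1 : ph γ W / ((γ - 1) * (rhoh W) ^ γ) = epsh W / (W 0) ^ (γ - 1) := by
    unfold ph rhoh
    rw [Real.rpow_sub ha, Real.rpow_one]
    have hγ0 : (W 0 : ℝ) ^ γ ≠ 0 := (Real.rpow_pos_of_pos ha γ).ne'
    field_simp
  rw [sh, h1, Real.log_div hεh.ne' (Real.rpow_pos_of_pos ha _).ne', Real.log_rpow ha,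
    heps, Real.log_div hQ.ne' (by positivity)]

open Plasma in
lemma se_eq (cv γ : ℝ) (hγ : 1 < γ) (W : Fin 5 → ℝ) (hd : 0 < W 3) (he : 0 < W 4) :
    se cv γ W = cv * (Real.log (W 4) - Real.log (W 3) - (γ - 1) * Real.log (W 3)) := by
  have hκ : γ - 1 ≠ 0 := by linarith
  have hεe : 0 < epse W := div_pos he hd
  have h1 : pe γ W / ((γ - 1) * (rhoe W) ^ γ) = epse W / (W 3) ^ (γ - 1) := by
    unfold pe rhoe
    rw [Real.rpow_sub hd, Real.rpow_one]
    have hγ0 : (W 3 : ℝ) ^ γ ≠ 0 := (Real.rpow_pos_of_pos hd γ).ne'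
    field_simp
  rw [se, h1, Real.log_div hεe.ne' (Real.rpow_pos_of_pos hd _).ne', Real.log_rpow hd,
    epse, Real.log_div he.ne' hd.ne']

set_option maxHeartbeats 2000000 in
open Plasma in
theorem stmt12 (cv γ : ℝ) (hcv : 0 < cv) (hγ : 1 < γ)
    (V : Fin 5 → ℝ) (hρh : 0 < V 0) (hρe : 0 < V 3)
    (heh : 0 < epsh V) (hee : 0 < epse V) :
    grad (Hpl cv γ) V 0 = (gh cv γ V - (u V) ^ 2 / 2) / Th cv V ∧
    grad (Hpl cv γ) V 1 = u V / Th cv V ∧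
    grad (Hpl cv γ) V 2 = -(1 / Th cv V) ∧
    grad (Hpl cv γ) V 3 = ge cv γ V / Te cv V ∧
    grad (Hpl cv γ) V 4 = 1 / Th cv V - 1 / Te cv V := by
  have hκ : (0:ℝ) < γ - 1 := by linarith
  set G : (Fin 5 → ℝ) → ℝ := fun W =>
    -(cv * (W 0 * (Real.log (2 * W 0 * W 2 - W 1 * W 1 - 2 * W 0 * W 4)
        - Real.log (2 * (W 0 * W 0)) - (γ - 1) * Real.log (W 0))
      + W 3 * (Real.log (W 4) - Real.log (W 3) - (γ - 1) * Real.log (W 3)))) with hGdef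
  -- the open set
  set S : Set (Fin 5 → ℝ) := {W | 0 < W 0} ∩ {W | 0 < W 3} ∩ {W | 0 < W 4} ∩
    {W | 0 < 2 * W 0 * W 2 - W 1 * W 1 - 2 * W 0 * W 4} with hSdef
  have hSopen : IsOpen S := by
    refine (((isOpen_lt continuous_const (continuous_apply 0)).inter
      (isOpen_lt continuous_const (continuous_apply 3))).inter
      (isOpen_lt continuous_const (continuous_apply 4))).inter
      (isOpen_lt continuous_const ?_)
    fun_prop
  have he4 : 0 < V 4 := by
    have : V 4 = epse V * V 3 := by rw [epse]; field_simp
    rw [this]; positivity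
  have hQV : 0 < 2 * V 0 * V 2 - V 1 * V 1 - 2 * V 0 * V 4 := by
    have h : 2 * V 0 * V 2 - V 1 * V 1 - 2 * V 0 * V 4 = 2 * (V 0 * V 0) * epsh V := by
      rw [epsh]; field_simp
    rw [h]; positivity
  have hVS : V ∈ S := ⟨⟨⟨hρh, hρe⟩, he4⟩, hQV⟩
  -- Hpl = G on S
  have hEqOn : Set.EqOn (Hpl cv γ) G S := by
    intro W hW
    obtain ⟨⟨⟨ha, hd⟩, he⟩, hQ⟩ := hW
    rw [Hpl, hGdef]
    rw [sh_eq cv γ hγ W ha hQ, se_eq cv γ hγ W hd he]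
    ring
  have hEv : Hpl cv γ =ᶠ[nhds V] G :=
    Filter.eventuallyEq_of_mem (hSopen.mem_nhds hVS) hEqOn
  -- derivative of G
  have hp0 := hasFDerivAt_apply (𝕜 := ℝ) (0 : Fin 5) V
  have hp1 := hasFDerivAt_apply (𝕜 := ℝ) (1 : Fin 5) V
  have hp2 := hasFDerivAt_apply (𝕜 := ℝ) (2 : Fin 5) V
  have hp3 := hasFDerivAt_apply (𝕜 := ℝ) (3 : Fin 5) V
  have hp4 := hasFDerivAt_apply (𝕜 := ℝ) (4 : Fin 5) V
  have hQd : HasFDerivAt (fun W : Fin 5 → ℝ => 2 * W 0 * W 2 - W 1 * W 1 - 2 * W 0 * W 4)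
      _ V := (((hp0.const_mul 2).mul hp2).sub (hp1.mul hp1)).sub ((hp0.const_mul 2).mul hp4)
  have hG : HasFDerivAt G _ V :=
    (((hp0.mul (((hQd.log hQV.ne').sub (((hp0.mul hp0).const_mul 2).log
        (by show (2:ℝ) * (V 0 * V 0) ≠ 0; positivity))).sub ((hp0.log hρh.ne').const_mul (γ - 1)))).add
      (hp3.mul (((hp4.log he4.ne').sub (hp3.log hρe.ne')).sub
        ((hp3.log hρe.ne').const_mul (γ - 1))))).const_mul cv).neg
  have hfd : ∀ i : Fin 5, grad (Hpl cv γ) V i = _ := fun i => by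
    rw [grad, pd, hEv.fderiv_eq, hG.fderiv]
  have hεh := heh
  have hεe := hee
  have h0 : V 0 ≠ 0 := hρh.ne'
  have h3 : V 3 ≠ 0 := hρe.ne'
  have hshV := sh_eq cv γ hγ V hρh hQV
  have hseV := se_eq cv γ hγ V hρe he4
  have hQe : 2 * V 0 * V 2 - V 1 * V 1 - 2 * V 0 * V 4 = 2 * (V 0 * V 0) * epsh V := by
    rw [epsh]; field_simp
  refine ⟨?_, ?_, ?_, ?_, ?_⟩
  · rw [hfd 0]
    simp [ContinuousLinearMap.add_apply, ContinuousLinearMap.smul_apply,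
      ContinuousLinearMap.sub_apply, ContinuousLinearMap.neg_apply,
      ContinuousLinearMap.proj_apply, Pi.single_apply]
    rw [gh, Th, u, ph, rhoh, hshV, hQe,
      show V 2 = V 0 * epsh V + V 1 ^ 2 / (2 * V 0) + V 4 by rw [epsh]; field_simp; ring]
    field_simp
    ring
  · rw [hfd 1]
    simp [ContinuousLinearMap.add_apply, ContinuousLinearMap.smul_apply,
      ContinuousLinearMap.sub_apply, ContinuousLinearMap.neg_apply,
      ContinuousLinearMap.proj_apply, Pi.single_apply]
    rw [Th, u, hQe]
    field_simp
    ring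
  · rw [hfd 2]
    simp [ContinuousLinearMap.add_apply, ContinuousLinearMap.smul_apply,
      ContinuousLinearMap.sub_apply, ContinuousLinearMap.neg_apply,
      ContinuousLinearMap.proj_apply, Pi.single_apply]
    rw [Th, hQe]
    field_simp
  · rw [hfd 3]
    simp [ContinuousLinearMap.add_apply, ContinuousLinearMap.smul_apply,
      ContinuousLinearMap.sub_apply, ContinuousLinearMap.neg_apply,
      ContinuousLinearMap.proj_apply, Pi.single_apply]
    rw [ge, Te, pe, rhoe, hseV, epse]
    field_simp
    ring
  · rw [hfd 4]
    simp [ContinuousLinearMap.add_apply, ContinuousLinearMap.smul_apply,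
      ContinuousLinearMap.sub_apply, ContinuousLinearMap.neg_apply,
      ContinuousLinearMap.proj_apply, Pi.single_apply]
    rw [Th, Te, epse, hQe]
    field_simp
    ring

end
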